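/- Let f : ℕ → ℝ be a sequence such that |f(n)| ≤ α·e^{s₀·n} for all n ≥ 1 (with α > 0, s₀ > 0). Then for every s > max(s₀, 0), the discrete Laplace transform of the sequence of partial sums n ↦ ∑_{k=1}^{n-1} f(k) satisfies ℓ_d{∑_{k=1}^{n-1} f(k)}(s) = ℓ_d{f(n)}(s)/(e^{s} − 1). -/

import Mathlib

/-- Transform of the sequence of partial sums `n ↦ ∑_{k=1}^{n-1} f(k)`:
for `s > max s₀ 0`, it equals `ℓ_d{f(n)}(s) / (e^s - 1)`. -/
theorem dlt_partial_sums (f : ℕ → ℝ) (α s₀ : ℝ) (hα : 0 < α) (hs₀ : 0 < s₀)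
    (hf : ∀ n : ℕ, 1 ≤ n → |f n| ≤ α * Real.exp (s₀ * n)) :
    ∀ s : ℝ, max s₀ 0 < s →
      (∑' n : ℕ, (∑ k ∈ Finset.Ioo 0 (n + 1), f k) * Real.exp (-s * (n + 1))) =
        (∑' n : ℕ, f (n + 1) * Real.exp (-s * (n + 1))) / (Real.exp s - 1) := by
  intro s hs
  have hs0 : (0:ℝ) < s := lt_of_le_of_lt (le_max_right _ _) hs
  have hss : s₀ < s := lt_of_le_of_lt (le_max_left _ _) hs
  set r : ℝ := Real.exp (s₀ - s) with hr
  have hr0 : (0:ℝ) ≤ r := (Real.exp_pos _).le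
  have hr1 : r < 1 := Real.exp_lt_one_iff.mpr (by linarith)
  set a : ℕ → ℝ := fun n => (∑ k ∈ Finset.Ioo 0 (n + 1), f k) * Real.exp (-s * (n + 1))
    with ha_def
  set b : ℕ → ℝ := fun n => f (n + 1) * Real.exp (-s * (n + 1)) with hb_def
  -- bound on partial sums
  have hS : ∀ n : ℕ, |∑ k ∈ Finset.Ioo 0 (n + 1), f k| ≤ (n : ℝ) * (α * Real.exp (s₀ * n)) := by
    intro n
    calc |∑ k ∈ Finset.Ioo 0 (n + 1), f k| ≤ ∑ k ∈ Finset.Ioo 0 (n + 1), |f k| :=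
          Finset.abs_sum_le_sum_abs _ _
      _ ≤ ∑ _k ∈ Finset.Ioo 0 (n + 1), (α * Real.exp (s₀ * n)) := by
          refine Finset.sum_le_sum (fun k hk => ?_)
          simp only [Finset.mem_Ioo] at hk
          refine le_trans (hf k hk.1) ?_
          have : s₀ * k ≤ s₀ * n := by
            have : (k:ℝ) ≤ n := by exact_mod_cast Nat.lt_succ_iff.mp hk.2
            nlinarith
          exact mul_le_mul_of_nonneg_left (Real.exp_le_exp.mpr this) hα.le
      _ = (n : ℝ) * (α * Real.exp (s₀ * n)) := by
          rw [Finset.sum_const, Nat.card_Ioo]; simp [nsmul_eq_mul]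
  have habound : ∀ n : ℕ, |a n| ≤ α * ((n : ℝ) ^ 1 * r ^ n) := by
    intro n
    have hrn : r ^ n = Real.exp ((s₀ - s) * n) := by
      rw [mul_comm, Real.exp_nat_mul]
    have he : Real.exp (s₀ * n) * Real.exp (-s * (n + 1)) ≤ r ^ n := by
      rw [← Real.exp_add, hrn]
      exact Real.exp_le_exp.mpr (by nlinarith)
    have h1 : |a n| = |∑ k ∈ Finset.Ioo 0 (n + 1), f k| * Real.exp (-s * (n + 1)) := by
      rw [ha_def, abs_mul, abs_of_pos (Real.exp_pos _)]
    rw [h1]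
    calc |∑ k ∈ Finset.Ioo 0 (n + 1), f k| * Real.exp (-s * (n + 1))
        ≤ ((n : ℝ) * (α * Real.exp (s₀ * n))) * Real.exp (-s * (n + 1)) := by
          exact mul_le_mul_of_nonneg_right (hS n) (Real.exp_pos _).le
      _ = α * ((n : ℝ) * (Real.exp (s₀ * n) * Real.exp (-s * (n + 1)))) := by ring
      _ ≤ α * ((n : ℝ) ^ 1 * r ^ n) := by
          have : (n : ℝ) * (Real.exp (s₀ * n) * Real.exp (-s * (n + 1))) ≤ (n : ℝ) ^ 1 * r ^ n := by
            simp only [pow_one]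
            exact mul_le_mul_of_nonneg_left he (Nat.cast_nonneg n)
          nlinarith
  have hgeom : Summable (fun n : ℕ => α * ((n : ℝ) ^ 1 * r ^ n)) := by
    refine Summable.mul_left _ ?_
    have := summable_pow_mul_geometric_of_norm_lt_one (R := ℝ) 1
      (r := r) (by rwa [Real.norm_eq_abs, abs_of_nonneg hr0])
    exact this
  have ha : Summable a := by
    refine Summable.of_abs (Summable.of_nonneg_of_le (fun n => abs_nonneg _) habound hgeom)
  have hbbound : ∀ n : ℕ, |b n| ≤ α * r ^ (n + 1) := by
    intro n
    have hrn : r ^ (n + 1) = Real.exp ((s₀ - s) * (n + 1)) := by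
      rw [mul_comm, ← Real.exp_nat_mul]; push_cast; ring_nf
    have h1 : |b n| = |f (n + 1)| * Real.exp (-s * (n + 1)) := by
      rw [hb_def, abs_mul, abs_of_pos (Real.exp_pos _)]
    rw [h1, hrn]
    calc |f (n + 1)| * Real.exp (-s * (n + 1))
        ≤ (α * Real.exp (s₀ * (n + 1))) * Real.exp (-s * (n + 1)) := by
          refine mul_le_mul_of_nonneg_right ?_ (Real.exp_pos _).le
          have := hf (n + 1) (Nat.le_add_left 1 n)
          simpa [Nat.cast_add] using this
      _ = α * Real.exp ((s₀ - s) * (n + 1)) := by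
          rw [mul_assoc, ← Real.exp_add]; ring_nf
  have hb : Summable b := by
    refine Summable.of_abs (Summable.of_nonneg_of_le (fun n => abs_nonneg _) hbbound ?_)
    exact (((summable_geometric_of_lt_one hr0 hr1).mul_left α).comp_injective
      Nat.succ_injective)
  -- key telescoping identity
  have hstep : ∀ n : ℕ, ∑ k ∈ Finset.Ioo 0 (n + 2), f k
      = (∑ k ∈ Finset.Ioo 0 (n + 1), f k) + f (n + 1) := by
    intro n
    rw [← Finset.Ico_add_one_left_eq_Ioo, ← Finset.Ico_add_one_left_eq_Ioo, show n+2 = (n+1)+1 from rfl,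
      Finset.sum_Ico_succ_top (by omega)]
  have hkey : ∀ n : ℕ, b n = Real.exp s * a (n + 1) - a n := by
    intro n
    have hE : Real.exp s * Real.exp (-s * ((n:ℝ) + 1 + 1)) = Real.exp (-s * ((n:ℝ) + 1)) := by
      rw [← Real.exp_add]; ring_nf
    simp only [ha_def, hb_def]
    have h2 : ((n:ℕ) + 1 + 1 : ℕ) = n + 2 := rfl
    rw [h2, hstep n]
    push_cast
    calc f (n + 1) * Real.exp (-s * ((n:ℝ) + 1))
        = ((∑ k ∈ Finset.Ioo 0 (n + 1), f k) + f (n + 1)) * Real.exp (-s * ((n:ℝ) + 1))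
          - (∑ k ∈ Finset.Ioo 0 (n + 1), f k) * Real.exp (-s * ((n:ℝ) + 1)) := by ring
      _ = ((∑ k ∈ Finset.Ioo 0 (n + 1), f k) + f (n + 1))
            * (Real.exp s * Real.exp (-s * ((n:ℝ) + 1 + 1)))
          - (∑ k ∈ Finset.Ioo 0 (n + 1), f k) * Real.exp (-s * ((n:ℝ) + 1)) := by rw [hE]
      _ = Real.exp s * (((∑ k ∈ Finset.Ioo 0 (n + 1), f k) + f (n + 1))
            * Real.exp (-s * ((n:ℝ) + 1 + 1)))
          - (∑ k ∈ Finset.Ioo 0 (n + 1), f k) * Real.exp (-s * ((n:ℝ) + 1)) := by ring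
  have ha' : Summable (fun n => Real.exp s * a n) := ha.mul_left _
  have ha'' : Summable (fun n => Real.exp s * a (n + 1)) :=
    ha'.comp_injective Nat.succ_injective
  have ha0 : a 0 = 0 := by
    have : Finset.Ioo 0 1 = (∅ : Finset ℕ) := rfl
    simp [ha_def, this]
  have htail : (∑' n, Real.exp s * a (n + 1)) = Real.exp s * ∑' n, a n := by
    have := Summable.tsum_eq_zero_add ha'
    rw [ha0, mul_zero, zero_add] at this
    rw [← this, tsum_mul_left]
  have hB : (∑' n, b n) = (Real.exp s - 1) * ∑' n, a n := by
    calc (∑' n, b n) = ∑' n, (Real.exp s * a (n + 1) - a n) := by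
          exact tsum_congr hkey
      _ = (∑' n, Real.exp s * a (n + 1)) - ∑' n, a n := Summable.tsum_sub ha'' ha
      _ = Real.exp s * (∑' n, a n) - ∑' n, a n := by rw [htail]
      _ = (Real.exp s - 1) * ∑' n, a n := by ring
  have hne : Real.exp s - 1 ≠ 0 := by
    have : (1:ℝ) < Real.exp s := Real.one_lt_exp_iff.mpr hs0
    linarith
  show (∑' n, a n) = (∑' n, b n) / (Real.exp s - 1)
  rw [hB]
  field_simp
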